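/- Compatibility of hyper normalisation with the copower comultiplication: let δ_X : Fin n × X → Fin n × (Fin n × X) be the map (i,x) ↦ (i,(i,x)), and for f : X → D(Y) let n∗f : Fin n × X → D(Fin n × Y) be (i,x) ↦ Σ_y f(x)(y)·η(i,y). Then for every ω ∈ D(Fin n × A): (n∗N_A)_*( N_{Fin n × A}( D(δ_A)(ω) ) ) = D(δ_{D(A)})( N_A(ω) ), where N_A : D(Fin n × A) → D(Fin n × D(A)) is hyper normalisation over base type A and N_{Fin n × A} : D(Fin n × (Fin n × A)) → D(Fin n × D(Fin n × A)) is hyper normalisation over base type Fin n × A. -/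

import Mathlib

open scoped ENNReal

noncomputable section

namespace HyperNorm

variable {A B : Type*} {n m : ℕ}

/-- `ω[i] = Σ_a ω(i,a)`. -/
def fmass (ω : PMF (Fin n × A)) (i : Fin n) : ℝ≥0∞ := ∑' a, ω (i, a)

lemma tsum_fmass (ω : PMF (Fin n × A)) : ∑' i, fmass ω i = 1 := by
  simp only [fmass]
  rw [← ENNReal.tsum_prod']
  exact ω.tsum_coe

lemma fmass_ne_top (ω : PMF (Fin n × A)) (i : Fin n) : fmass ω i ≠ ⊤ := by
  apply ne_top_of_le_ne_top ENNReal.one_ne_top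
  rw [← tsum_fmass ω]
  exact ENNReal.le_tsum i

/-- The first marginal `i ↦ ω[i]` as a distribution. -/
def fstM (ω : PMF (Fin n × A)) : PMF (Fin n) :=
  ⟨fun i => fmass ω i, ENNReal.summable.hasSum_iff.mpr (tsum_fmass ω)⟩

/-- The normalised `i`-th component `ω_i(a) = ω(i,a)/ω[i]` (junk value if `ω[i] = 0`,
which never contributes to `hnorm` below since it is weighted by `ω[i] = 0`). -/
def ncond (ω : PMF (Fin n × A)) (i : Fin n) : PMF A :=
  if h : fmass ω i ≠ 0 then
    ⟨fun a => ω (i, a) / fmass ω i,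
      ENNReal.summable.hasSum_iff.mpr (by
        simp only [div_eq_mul_inv]
        rw [ENNReal.tsum_mul_right, ← div_eq_mul_inv]
        exact ENNReal.div_self h (fmass_ne_top ω i))⟩
  else PMF.pure (ω.support_nonempty.some.2)

/-- Hyper normalisation `N(ω) = Σ_{i with ω[i] ≠ 0} ω[i]·η(i, ω_i)`. -/
def hnorm (ω : PMF (Fin n × A)) : PMF (Fin n × PMF A) :=
  (fstM ω).bind fun i => PMF.pure (i, ncond ω i)

/-- Graph map `gr(f)(x)(y,x') = f(x)(y) if x' = x, else 0`. -/
def gr {X Y : Type*} (f : X → PMF Y) : X → PMF (Y × X) :=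
  fun x => (f x).map fun y => (y, x)


lemma pbind_congr {α β : Type*} (p : PMF α) {f g : α → PMF β}
    (h : ∀ a, p a ≠ 0 → f a = g a) : p.bind f = p.bind g := by
  ext b
  simp only [PMF.bind_apply]
  refine tsum_congr fun a => ?_
  by_cases ha : p a = 0
  · simp [ha]
  · rw [h a ha]

lemma ncond_apply (ω : PMF (Fin n × A)) {i : Fin n} (h : fmass ω i ≠ 0) (a : A) :
    ncond ω i a = ω (i, a) / fmass ω i := by
  erw [ncond, dif_pos h]
  rfl

lemma fstM_apply (ω : PMF (Fin n × A)) (i : Fin n) : fstM ω i = fmass ω i := rfl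

lemma map_delta_apply (ω : PMF (Fin n × A)) (i : Fin n) (p : Fin n × A) :
    (ω.map fun p : Fin n × A => (p.1, p)) (i, p) = if i = p.1 then ω p else 0 := by
  rw [PMF.map_apply, tsum_eq_single p]
  · rcases p with ⟨j, a⟩
    by_cases h : i = j <;> simp [h, Prod.ext_iff]
  · intro q hq
    rcases q with ⟨j, a⟩
    simp only [ite_eq_right_iff, Prod.mk.injEq]
    rintro ⟨-, rfl⟩
    exact absurd rfl hq

lemma fmass_map_delta (ω : PMF (Fin n × A)) (i : Fin n) :
    fmass (ω.map fun p : Fin n × A => (p.1, p)) i = fmass ω i := by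
  simp only [fmass, map_delta_apply]
  rw [ENNReal.tsum_prod']
  rw [tsum_eq_single i]
  · simp
  · intro j hj
    simp [Ne.symm hj]

lemma map_inl_apply (ν : PMF A) (i j : Fin n) (a : A) :
    (ν.map fun a => (i, a)) (j, a) = if j = i then ν a else 0 := by
  rw [PMF.map_apply, tsum_eq_single a]
  · by_cases h : j = i <;> simp [h, Prod.ext_iff]
  · intro b hb
    simp only [ite_eq_right_iff, Prod.mk.injEq]
    rintro ⟨-, rfl⟩
    exact absurd rfl hb

lemma fmass_map_inl (ν : PMF A) (i j : Fin n) :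
    fmass (ν.map fun a => (i, a)) j = if j = i then 1 else 0 := by
  simp only [fmass, map_inl_apply]
  by_cases h : j = i <;> simp [h, ν.tsum_coe]

lemma ncond_map_inl (ν : PMF A) (i : Fin n) :
    ncond (ν.map fun a => (i, a)) i = ν := by
  have h : fmass (ν.map fun a => (i, a)) i ≠ 0 := by simp [fmass_map_inl]
  ext a
  rw [ncond_apply _ h, fmass_map_inl, map_inl_apply]
  simp

lemma hnorm_map_inl (ν : PMF A) (i : Fin n) :
    hnorm (ν.map fun a => (i, a)) = PMF.pure (i, ν) := by
  have hfst : fstM (ν.map fun a => (i, a)) = PMF.pure i := by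
    ext j
    rw [fstM_apply, fmass_map_inl, PMF.pure_apply]
    split_ifs <;> rfl
  rw [hnorm, hfst, PMF.pure_bind, ncond_map_inl]

lemma ncond_map_delta (ω : PMF (Fin n × A)) {i : Fin n} (h : fmass ω i ≠ 0) :
    ncond (ω.map fun p : Fin n × A => (p.1, p)) i = (ncond ω i).map fun a => (i, a) := by
  have h' : fmass (ω.map fun p : Fin n × A => (p.1, p)) i ≠ 0 := by
    rwa [fmass_map_delta]
  ext ⟨j, a⟩
  rw [ncond_apply _ h', fmass_map_delta, map_delta_apply, map_inl_apply]
  by_cases hj : j = i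
  · subst hj
    rw [if_pos rfl, if_pos rfl, ncond_apply ω h]
  · rw [if_neg (Ne.symm hj), if_neg hj, ENNReal.zero_div]

/-- compatibility of hyper normalisation with the copower
comultiplication `δ(i,x) = (i,(i,x))`:
`(n∗N_A)_*(N_{Fin n × A}(D(δ_A)(ω))) = D(δ_{D(A)})(N_A(ω))`. -/
theorem hnorm_comult (ω : PMF (Fin n × A)) :
    (hnorm (ω.map fun p : Fin n × A => (p.1, p))).bind
        (fun q : Fin n × PMF (Fin n × A) => (hnorm q.2).map fun y => (q.1, y)) =
      (hnorm ω).map fun p : Fin n × PMF A => (p.1, p) := by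
  have hfst : fstM (ω.map fun p : Fin n × A => (p.1, p)) = fstM ω := by
    ext i
    rw [fstM_apply, fstM_apply, fmass_map_delta]
  rw [hnorm, hfst, PMF.bind_bind, hnorm, PMF.map_bind]
  refine pbind_congr _ fun i hi => ?_
  rw [PMF.pure_bind, PMF.pure_map]
  have hi' : fmass ω i ≠ 0 := hi
  rw [ncond_map_delta ω hi', hnorm_map_inl, PMF.pure_map]

end HyperNorm
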